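/- CDF constraints imposed by coarse correlated equilibria in the two-bidder single-item γ-hybrid auction: Let γ ∈ [0,1], valuations v_1 = 1 and v_2 = v with 0 ≤ v ≤ 1. Let μ be a probability measure on no-overbidding bid profiles (b_1 ≤ 1, b_2 ≤ v, μ-a.s.), with utilities μ-integrable, satisfying the coarse correlated equilibrium condition for constant deviations b'_i ∈ [0, v_i]. Set α := E_{b∼μ}[u_1(b)]. Then: (i) for every x ∈ [0,1), μ({b : b_2 < x}) ≤ α/(1−x); and (ii) if v < 1 then α ≥ 1 − v. -/

import Mathlib

open MeasureTheory
open scoped NNReal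

/-- CDF constraints imposed by coarse correlated equilibria in the two-bidder
single-item γ-hybrid auction with valuations `v₁ = 1` and `v₂ = v ≤ 1`: writing
`α = E[u₁]`, (i) for every `x ∈ [0,1)` the probability that bidder 2 bids below `x` is
at most `α/(1-x)`; (ii) if `v < 1` then `α ≥ 1 - v`.  Here `w b ∈ Fin 2` is the winner
(the higher bidder, with an arbitrary fixed tie rule), who pays `γ` times their own bid
plus `(1-γ)` times the opponent's bid. -/
theorem cce_cdf_constraints_two_bidders
    (γ : ℝ) (hγ0 : 0 ≤ γ) (hγ1 : γ ≤ 1) (v : ℝ) (hv0 : 0 ≤ v) (hv1 : v ≤ 1)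
    (w : ℝ≥0 × ℝ≥0 → Fin 2)
    (hw : ∀ b : ℝ≥0 × ℝ≥0, (w b = 0 → b.2 ≤ b.1) ∧ (w b = 1 → b.1 ≤ b.2))
    (u1 u2 : ℝ≥0 × ℝ≥0 → ℝ)
    (hu1 : ∀ b, u1 b = if w b = 0 then 1 - (γ * (b.1 : ℝ) + (1 - γ) * (b.2 : ℝ)) else 0)
    (hu2 : ∀ b, u2 b = if w b = 1 then v - (γ * (b.2 : ℝ) + (1 - γ) * (b.1 : ℝ)) else 0)
    (μ : Measure (ℝ≥0 × ℝ≥0)) [IsProbabilityMeasure μ]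
    (hNOB : ∀ᵐ b ∂μ, (b.1 : ℝ) ≤ 1 ∧ (b.2 : ℝ) ≤ v)
    (hInt1 : Integrable u1 μ) (hInt2 : Integrable u2 μ)
    (hIntdev1 : ∀ b' : ℝ≥0, Integrable (fun b : ℝ≥0 × ℝ≥0 => u1 (b', b.2)) μ)
    (hIntdev2 : ∀ b' : ℝ≥0, Integrable (fun b : ℝ≥0 × ℝ≥0 => u2 (b.1, b')) μ)
    (hCCE1 : ∀ b' : ℝ≥0, (b' : ℝ) ≤ 1 →
      ∫ b, u1 (b', b.2) ∂μ ≤ ∫ b, u1 b ∂μ)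
    (hCCE2 : ∀ b' : ℝ≥0, (b' : ℝ) ≤ v →
      ∫ b, u2 (b.1, b') ∂μ ≤ ∫ b, u2 b ∂μ)
    (α : ℝ) (hα : α = ∫ b, u1 b ∂μ) :
    (∀ x : ℝ, 0 ≤ x → x < 1 →
      (μ {b : ℝ≥0 × ℝ≥0 | (b.2 : ℝ) < x}).toReal ≤ α / (1 - x)) ∧
    (v < 1 → 1 - v ≤ α) := by
  -- general lower bound on deviation utility
  have key : ∀ t : ℝ, 0 ≤ t → t ≤ 1 →
      ∀ b : ℝ≥0 × ℝ≥0, (b.2 : ℝ) ≤ t → (if w (t.toNNReal, b.2) = 0 then (1 : ℝ) - t else 0)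
        ≤ u1 (t.toNNReal, b.2) := by
    intro t ht0 ht1 b hb2
    have hct : ((t.toNNReal : ℝ≥0) : ℝ) = t := Real.coe_toNNReal t ht0
    rw [hu1]
    by_cases h : w (t.toNNReal, b.2) = 0
    · simp only [h, if_true, hct]
      nlinarith
    · simp [h]
  constructor
  · intro x hx0 hx1
    set b' : ℝ≥0 := x.toNNReal with hb'
    have hcx : ((b' : ℝ≥0) : ℝ) = x := Real.coe_toNNReal x hx0
    set S : Set (ℝ≥0 × ℝ≥0) := {b : ℝ≥0 × ℝ≥0 | (b.2 : ℝ) < x} with hS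
    have hSm : MeasurableSet S := by
      have : Measurable fun b : ℝ≥0 × ℝ≥0 => (b.2 : ℝ) :=
        measurable_coe_nnreal_real.comp measurable_snd
      exact measurableSet_lt this measurable_const
    -- indicator lower bound
    have hind : ∀ b : ℝ≥0 × ℝ≥0, S.indicator (fun _ => (1 : ℝ) - x) b ≤ u1 (b', b.2) := by
      intro b
      by_cases hb : b ∈ S
      · rw [Set.indicator_of_mem hb]
        have hb2 : (b.2 : ℝ) < x := hb
        have hw0 : w (b', b.2) = 0 := by
          by_contra h0
          have h1 : w (b', b.2) = 1 := by omega
          have h2 := (hw (b', b.2)).2 h1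
          have : ((b' : ℝ≥0) : ℝ) ≤ (b.2 : ℝ) := by exact_mod_cast h2
          rw [hcx] at this; linarith
        have := key x hx0 hx1.le b hb2.le
        rwa [hw0, if_pos rfl] at this
      · rw [Set.indicator_of_notMem hb]
        rw [hu1]
        by_cases h : w (b', b.2) = 0
        · simp only [h, if_true]
          have h21 : b.2 ≤ b' := (hw (b', b.2)).1 h
          have h21' : (b.2 : ℝ) ≤ x := by
            have : ((b.2 : ℝ≥0) : ℝ) ≤ ((b' : ℝ≥0) : ℝ) := by exact_mod_cast h21
            rwa [hcx] at this
          rw [hcx]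
          nlinarith
        · simp [h]
    have hIi : Integrable (S.indicator fun _ => (1 : ℝ) - x) μ :=
      (integrable_const _).indicator hSm
    have hmono : ∫ b, S.indicator (fun _ => (1 : ℝ) - x) b ∂μ ≤ ∫ b, u1 (b', b.2) ∂μ :=
      integral_mono hIi (hIntdev1 b') hind
    rw [integral_indicator_const _ hSm] at hmono
    have hle : (1 - x) * (μ S).toReal ≤ α := by
      rw [hα]
      calc (1 - x) * (μ S).toReal ≤ ∫ b, u1 (b', b.2) ∂μ := by
            simpa [smul_eq_mul, mul_comm, Measure.real] using hmono
        _ ≤ ∫ b, u1 b ∂μ := hCCE1 b' (by rw [hcx]; exact hx1.le)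
    rw [div_eq_inv_mul, le_inv_mul_iff₀ (by linarith : (0:ℝ) < 1 - x)]
    linarith [hle]
  · intro hv
    -- α ≥ 0
    have hα0 : 0 ≤ α := by
      rw [hα]
      refine le_trans ?_ (hCCE1 0 (by norm_num))
      refine integral_nonneg fun b => ?_
      rw [hu1]
      by_cases h : w (0, b.2) = 0
      · simp only [h, if_true]
        have h2 : b.2 ≤ (0 : ℝ≥0) := (hw (0, b.2)).1 h
        have hb0 : b.2 = 0 := le_antisymm h2 zero_le
        simp only [hb0, NNReal.coe_zero, mul_zero, add_zero]
        norm_num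
      · simp [h]
    have main : ∀ t : ℝ, v < t → t ≤ 1 → 1 - t ≤ α := by
      intro t hvt ht1
      have ht0 : 0 ≤ t := le_trans hv0 hvt.le
      have hct : ((t.toNNReal : ℝ≥0) : ℝ) = t := Real.coe_toNNReal t ht0
      have hae : ∀ᵐ b ∂μ, (1 : ℝ) - t ≤ u1 (t.toNNReal, b.2) := by
        filter_upwards [hNOB] with b hb
        have hb2 : (b.2 : ℝ) ≤ t := le_trans hb.2 hvt.le
        have hw0 : w (t.toNNReal, b.2) = 0 := by
          by_contra h0
          have h1 : w (t.toNNReal, b.2) = 1 := by omega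
          have h2 := (hw (t.toNNReal, b.2)).2 h1
          have : t ≤ (b.2 : ℝ) := by rw [← hct]; exact_mod_cast h2
          linarith [hb.2]
        have := key t ht0 ht1 b hb2
        rwa [hw0, if_pos rfl] at this
      have hmono : ∫ _, (1 : ℝ) - t ∂μ ≤ ∫ b, u1 (t.toNNReal, b.2) ∂μ :=
        integral_mono_ae (integrable_const _) (hIntdev1 t.toNNReal) hae
      rw [integral_const, probReal_univ, one_smul] at hmono
      rw [hα]
      exact le_trans hmono (hCCE1 _ (by rw [hct]; exact ht1))
    refine le_of_forall_pos_le_add ?_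
    intro ε hε
    by_cases h : v + ε ≤ 1
    · have := main (v + ε) (by linarith) h
      linarith
    · linarith
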